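/- For every ε > 0, every continuous zero-sum game G = (X, Y, u) admits an ε-equilibrium (p*, q*) in which both p* and q* are finitely supported mixed strategies. -/

import Mathlib

open MeasureTheory
open Finset

theorem my_minimax {ι κ : Type*} [Fintype ι] [Fintype κ] [Nonempty ι] [Nonempty κ]
    (A : ι → κ → ℝ) :
    ∃ p ∈ stdSimplex ℝ ι, ∃ q ∈ stdSimplex ℝ κ, ∃ v : ℝ,
      (∀ a, ∑ b, q b * A a b ≤ v) ∧ (∀ b, v ≤ ∑ a, p a * A a b) := by
  classical
  set Φ : (κ → ℝ) →ₗ[ℝ] (ι → ℝ) :=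
    { toFun := fun q a => ∑ b, q b * A a b
      map_add' := by intro x y; funext a; simp [add_mul, Finset.sum_add_distrib]
      map_smul' := by intro c x; funext a; simp [Finset.mul_sum, mul_assoc] } with hΦdef
  have hΦapp : ∀ q a, Φ q a = ∑ b, q b * A a b := fun q a => rfl
  have hΦc : Continuous Φ := by
    apply continuous_pi
    intro a
    simp only [hΦapp]
    exact continuous_finset_sum _ fun b _ => (continuous_apply b).mul continuous_const
  have hg : Continuous fun q : κ → ℝ => univ.sup' univ_nonempty (fun a => Φ q a) := by
    rw [continuous_iff_continuousAt]
    intro x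
    exact ContinuousAt.finset_sup'_apply univ_nonempty
      (fun a _ => ((continuous_apply a).comp hΦc).continuousAt)
  obtain ⟨q0, hq0, hq0min⟩ := (isCompact_stdSimplex ℝ κ).exists_isMinOn
    ⟨_, single_mem_stdSimplex ℝ (Classical.arbitrary κ)⟩ hg.continuousOn
  set v : ℝ := univ.sup' univ_nonempty (fun a => Φ q0 a) with hv
  set D : Set (ι → ℝ) := {x | ∀ a, x a < v} with hD
  set C : Set (ι → ℝ) := Φ '' stdSimplex ℝ κ with hC
  have hDeq : D = ⋂ a, (fun x : ι → ℝ => x a) ⁻¹' Set.Iio v := by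
    ext x; simp [hD]
  have hDopen : IsOpen D := by
    rw [hDeq]
    exact isOpen_iInter_of_finite fun a => (continuous_apply a).isOpen_preimage _ isOpen_Iio
  have hDconv : Convex ℝ D := by
    rw [hDeq]
    exact convex_iInter fun a => (convex_Iio v).linear_preimage (LinearMap.proj (R := ℝ) (φ := fun _ : ι => ℝ) a)
  have hCconv : Convex ℝ C := (convex_stdSimplex ℝ κ).linear_image Φ
  have hdisj : Disjoint D C := by
    rw [Set.disjoint_left]
    rintro x hxD ⟨q, hq, rfl⟩
    have h1 : v ≤ univ.sup' univ_nonempty (fun a => Φ q a) := hq0min hq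
    obtain ⟨a, -, ha⟩ := exists_mem_eq_sup' univ_nonempty (fun a => Φ q a)
    exact absurd (hxD a) (by rw [← ha] at *; linarith)
  obtain ⟨f, c, hfD, hfC⟩ := geometric_hahn_banach_open hDconv hDopen hCconv hdisj
  set p0 : ι → ℝ := fun a => f (fun j => if a = j then 1 else 0) with hp0
  have hrep : ∀ x : ι → ℝ, f x = ∑ a, x a * p0 a := by
    intro x
    conv_lhs => rw [pi_eq_sum_univ x]
    rw [map_sum]
    simp [smul_eq_mul]
    rfl
  have heD : (fun _ : ι => v - 1) ∈ D := fun a => by simp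
  have hfe : f (fun _ => v - 1) < c := hfD _ heD
  have hp0nn : ∀ a, 0 ≤ p0 a := by
    intro a
    by_contra hneg
    push_neg at hneg
    set t : ℝ := (c - f (fun _ => v - 1) + 1) / (-p0 a) with ht
    have htpos : 0 < t := div_pos (by linarith) (by linarith)
    have hxD : ((fun _ : ι => v - 1) - t • (fun j => if a = j then (1:ℝ) else 0)) ∈ D := by
      intro j
      simp only [Pi.sub_apply, Pi.smul_apply, smul_eq_mul]
      by_cases h : a = j <;> simp [h] <;> nlinarith
    have := hfD _ hxD
    rw [map_sub, _root_.map_smul] at this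
    have hts : t * (-p0 a) = c - f (fun _ => v - 1) + 1 :=
      div_mul_cancel₀ _ (by linarith)
    simp only [smul_eq_mul] at this
    nlinarith
  have hCne : Φ q0 ∈ C := ⟨q0, hq0, rfl⟩
  have hp0ne : ∃ a, 0 < p0 a := by
    by_contra h
    push_neg at h
    have hz : ∀ a, p0 a = 0 := fun a => le_antisymm (h a) (hp0nn a)
    have h1 : f (Φ q0) = 0 := by rw [hrep]; simp [hz]
    have h2 := hfC _ hCne
    rw [h1] at h2
    have h3 : f (fun _ : ι => v - 1) = 0 := by rw [hrep]; simp [hz]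
    rw [h3] at hfe
    linarith
  set s0 : ℝ := ∑ a, p0 a with hs0
  have hs0pos : 0 < s0 := Finset.sum_pos' (fun a _ => hp0nn a)
    (hp0ne.imp fun a ha => ⟨mem_univ a, ha⟩)
  have hvc : v * s0 ≤ c := by
    by_contra h
    push_neg at h
    set t : ℝ := (v * s0 - c) / (2 * s0) with htd
    have htpos : 0 < t := div_pos (by linarith) (by linarith)
    have hmem : (fun _ : ι => v - t) ∈ D := fun a => by simp [htpos]
    have hlt := hfD _ hmem
    rw [hrep] at hlt
    have : ∑ a, (v - t) * p0 a = (v - t) * s0 := by rw [← Finset.mul_sum]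
    rw [this] at hlt
    have hts : t * (2 * s0) = v * s0 - c := div_mul_cancel₀ _ (by linarith)
    nlinarith
  refine ⟨fun a => p0 a / s0, ⟨fun a => div_nonneg (hp0nn a) hs0pos.le, ?_⟩, q0, hq0, v,
    fun a => ?_, fun b => ?_⟩
  · rw [← Finset.sum_div, ← hs0, div_self hs0pos.ne']
  · exact (hΦapp q0 a) ▸ Finset.le_sup' (fun a => Φ q0 a) (mem_univ a)
  · have hcol : Φ (fun b' => if b = b' then 1 else 0) ∈ C :=
      ⟨_, ite_eq_mem_stdSimplex ℝ b, rfl⟩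
    have h1 := hfC _ hcol
    rw [hrep] at h1
    have h2 : ∀ a, Φ (fun b' => if b = b' then (1:ℝ) else 0) a = A a b := by
      intro a
      rw [hΦapp]
      simp [ite_mul]
    simp only [h2] at h1
    have h3 : ∑ a, (p0 a / s0) * A a b = (∑ a, A a b * p0 a) / s0 := by
      rw [Finset.sum_div]
      exact Finset.sum_congr rfl fun a _ => by ring
    rw [h3, le_div_iff₀ hs0pos]
    linarith

/-- A continuous real function on a compact space is integrable w.r.t. any finite measure. -/
lemma cont_int {α : Type*} [TopologicalSpace α] [CompactSpace α] [T2Space α]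
    [MeasurableSpace α] [OpensMeasurableSpace α] (μ : Measure α) [IsFiniteMeasure μ]
    {f : α → ℝ} (hf : Continuous f) : Integrable f μ :=
  hf.integrable_of_hasCompactSupport (HasCompactSupport.of_compactSpace f)

/-- every continuous zero-sum game admits, for every ε > 0, an
ε-equilibrium in finitely supported mixed strategies. -/
theorem stmt_4 {m n : ℕ}
    (X : Set (EuclideanSpace ℝ (Fin m))) (Y : Set (EuclideanSpace ℝ (Fin n)))
    (hXne : X.Nonempty) (hXc : IsCompact X) (hYne : Y.Nonempty) (hYc : IsCompact Y)
    (u : X × Y → ℝ) (hu : Continuous u)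
    (ε : ℝ) (hε : 0 < ε) :
    ∃ (ps : Measure X) (qs : Measure Y), IsProbabilityMeasure ps ∧ IsProbabilityMeasure qs ∧
      -- finitely supported
      (∃ s : Finset X, ps ((↑s : Set X)ᶜ) = 0) ∧
      (∃ t : Finset Y, qs ((↑t : Set Y)ᶜ) = 0) ∧
      -- ε-equilibrium
      (∀ (p : Measure X) [IsProbabilityMeasure p],
        ∫ z, u z ∂(p.prod qs) - ε ≤ ∫ z, u z ∂(ps.prod qs)) ∧
      (∀ (q : Measure Y) [IsProbabilityMeasure q],
        ∫ z, u z ∂(ps.prod qs) ≤ ∫ z, u z ∂(ps.prod q) + ε) := by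
  classical
  haveI : CompactSpace X := isCompact_iff_compactSpace.mp hXc
  haveI : CompactSpace Y := isCompact_iff_compactSpace.mp hYc
  haveI : Nonempty X := hXne.to_subtype
  haveI : Nonempty Y := hYne.to_subtype
  -- uniform continuity
  obtain ⟨δ, hδ, hδu⟩ := Metric.uniformContinuous_iff.mp
    (CompactSpace.uniformContinuous_of_continuous hu) (ε/2) (by linarith)
  -- finite δ-nets
  obtain ⟨tX, htXfin, htXcov⟩ :=
    Metric.totallyBounded_iff.mp (isCompact_univ (X := X)).totallyBounded δ hδ
  obtain ⟨tY, htYfin, htYcov⟩ :=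
    Metric.totallyBounded_iff.mp (isCompact_univ (X := Y)).totallyBounded δ hδ
  set S : Finset X := htXfin.toFinset with hSdef
  set T : Finset Y := htYfin.toFinset with hTdef
  have hScov : ∀ x : X, ∃ a ∈ S, dist x a < δ := by
    intro x
    have := htXcov (Set.mem_univ x)
    simp only [Set.mem_iUnion] at this
    obtain ⟨a, ha, hball⟩ := this
    exact ⟨a, htXfin.mem_toFinset.mpr ha, Metric.mem_ball.mp hball⟩
  have hTcov : ∀ y : Y, ∃ b ∈ T, dist y b < δ := by
    intro y
    have := htYcov (Set.mem_univ y)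
    simp only [Set.mem_iUnion] at this
    obtain ⟨b, hb, hball⟩ := this
    exact ⟨b, htYfin.mem_toFinset.mpr hb, Metric.mem_ball.mp hball⟩
  choose rX hrXS hrXd using hScov
  choose rY hrYT hrYd using hTcov
  haveI : Nonempty {a // a ∈ S} := ⟨⟨rX (Classical.arbitrary X), hrXS _⟩⟩
  haveI : Nonempty {b // b ∈ T} := ⟨⟨rY (Classical.arbitrary Y), hrYT _⟩⟩
  -- solve the finite game
  obtain ⟨p, hp, q, hq, v, hrow, hcol⟩ :=
    my_minimax (fun (a : {a // a ∈ S}) (b : {b // b ∈ T}) => u (↑a, ↑b))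
  -- the finitely supported measures
  set ps : Measure X := ∑ a : {a // a ∈ S}, ENNReal.ofReal (p a) • Measure.dirac (a : X)
    with hpsdef
  set qs : Measure Y := ∑ b : {b // b ∈ T}, ENNReal.ofReal (q b) • Measure.dirac (b : Y)
    with hqsdef
  have hps : IsProbabilityMeasure ps := by
    constructor
    rw [hpsdef, Measure.finset_sum_apply]
    simp only [Measure.smul_apply, Measure.dirac_apply_of_mem (Set.mem_univ _), smul_eq_mul,
      mul_one]
    rw [← ENNReal.ofReal_sum_of_nonneg (fun a _ => hp.1 a), hp.2, ENNReal.ofReal_one]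
  have hqs : IsProbabilityMeasure qs := by
    constructor
    rw [hqsdef, Measure.finset_sum_apply]
    simp only [Measure.smul_apply, Measure.dirac_apply_of_mem (Set.mem_univ _), smul_eq_mul,
      mul_one]
    rw [← ENNReal.ofReal_sum_of_nonneg (fun b _ => hq.1 b), hq.2, ENNReal.ofReal_one]
  haveI := hps
  haveI := hqs
  -- integrals against the atomic measures
  have hpsint : ∀ f : X → ℝ, ∫ x, f x ∂ps = ∑ a : {a // a ∈ S}, p a * f ↑a := by
    intro f
    have h0 : ∀ a ∈ (Finset.univ : Finset {a // a ∈ S}),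
        Integrable f (ENNReal.ofReal (p a) • Measure.dirac (a : X)) := fun a _ =>
      ((integrable_const (f ↑a)).congr (ae_eq_dirac f).symm).smul_measure
        ENNReal.ofReal_ne_top
    rw [hpsdef, integral_finset_sum_measure h0]
    refine Finset.sum_congr rfl fun a _ => ?_
    rw [integral_smul_measure, integral_dirac, smul_eq_mul, ENNReal.toReal_ofReal (hp.1 a)]
  have hqsint : ∀ f : Y → ℝ, ∫ y, f y ∂qs = ∑ b : {b // b ∈ T}, q b * f ↑b := by
    intro f
    have h0 : ∀ b ∈ (Finset.univ : Finset {b // b ∈ T}),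
        Integrable f (ENNReal.ofReal (q b) • Measure.dirac (b : Y)) := fun b _ =>
      ((integrable_const (f ↑b)).congr (ae_eq_dirac f).symm).smul_measure
        ENNReal.ofReal_ne_top
    rw [hqsdef, integral_finset_sum_measure h0]
    refine Finset.sum_congr rfl fun b _ => ?_
    rw [integral_smul_measure, integral_dirac, smul_eq_mul, ENNReal.toReal_ofReal (hq.1 b)]
  -- continuity of the partial payoff functions
  set g : X → ℝ := fun x => ∑ b : {b // b ∈ T}, q b * u (x, ↑b) with hgdef
  set h : Y → ℝ := fun y => ∑ a : {a // a ∈ S}, p a * u (↑a, y) with hhdef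
  have hgc : Continuous g :=
    continuous_finset_sum _ fun b _ =>
      continuous_const.mul (hu.comp (Continuous.prodMk_left (↑b : Y)))
  have hhc : Continuous h :=
    continuous_finset_sum _ fun a _ =>
      continuous_const.mul (hu.comp (Continuous.prodMk_right (↑a : X)))
  -- Fubini computations
  have hI : ∀ (π : Measure X), IsProbabilityMeasure π →
      ∫ z, u z ∂(π.prod qs) = ∫ x, g x ∂π := by
    intro π hπ
    haveI := hπ
    rw [MeasureTheory.integral_prod _ (cont_int _ hu)]
    refine integral_congr_ae (Filter.Eventually.of_forall fun x => ?_)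
    exact hqsint (fun y => u (x, y))
  have hII : ∀ (ρ : Measure Y), IsProbabilityMeasure ρ →
      ∫ z, u z ∂(ps.prod ρ) = ∫ y, h y ∂ρ := by
    intro ρ hρ
    haveI := hρ
    rw [MeasureTheory.integral_prod _ (cont_int _ hu),
      hpsint (fun x => ∫ y, u (x, y) ∂ρ)]
    rw [hhdef]
    have hint : ∀ a ∈ (Finset.univ : Finset {a // a ∈ S}),
        Integrable (fun y => p a * u (↑a, y)) ρ := fun a _ =>
      (cont_int ρ (show Continuous fun y : Y => u (↑a, y) from
        hu.comp (Continuous.prodMk_right _))).const_mul (p a)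
    rw [integral_finset_sum _ hint]
    refine Finset.sum_congr rfl fun a _ => ?_
    rw [integral_const_mul]
  -- pointwise approximation bounds
  have hub : ∀ (x : X) (y : Y), |u (x, y) - u (rX x, y)| < ε/2 := by
    intro x y
    have hd : dist ((x, y) : X × Y) (rX x, y) < δ := by
      rw [Prod.dist_eq, dist_self]
      exact max_lt (hrXd x) hδ
    have := hδu hd
    rwa [Real.dist_eq] at this
  have hvb : ∀ (x : X) (y : Y), |u (x, y) - u (x, rY y)| < ε/2 := by
    intro x y
    have hd : dist ((x, y) : X × Y) (x, rY y) < δ := by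
      rw [Prod.dist_eq, dist_self]
      exact max_lt hδ (hrYd y)
    have := hδu hd
    rwa [Real.dist_eq] at this
  -- pointwise bounds on g and h
  have hgle : ∀ x : X, g x ≤ v + ε/2 := by
    intro x
    have h1 : g x ≤ ∑ b : {b // b ∈ T}, q b * (u (rX x, ↑b) + ε/2) := by
      refine Finset.sum_le_sum fun b _ => mul_le_mul_of_nonneg_left ?_ (hq.1 b)
      have := hub x ↑b
      rw [abs_sub_lt_iff] at this
      linarith [this.1]
    have h2 : ∑ b : {b // b ∈ T}, q b * (u (rX x, ↑b) + ε/2)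
        = (∑ b : {b // b ∈ T}, q b * u (rX x, ↑b)) + ε/2 := by
      simp only [mul_add]
      rw [Finset.sum_add_distrib, ← Finset.sum_mul, hq.2, one_mul]
    have h3 := hrow ⟨rX x, hrXS x⟩
    calc g x ≤ _ := h1
      _ = _ := h2
      _ ≤ v + ε/2 := by linarith
  have hhge : ∀ y : Y, v - ε/2 ≤ h y := by
    intro y
    have h1 : ∑ a : {a // a ∈ S}, p a * (u (↑a, rY y) - ε/2) ≤ h y := by
      refine Finset.sum_le_sum fun a _ => mul_le_mul_of_nonneg_left ?_ (hp.1 a)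
      have := hvb ↑a y
      rw [abs_sub_lt_iff] at this
      linarith [this.1]
    have h2 : ∑ a : {a // a ∈ S}, p a * (u (↑a, rY y) - ε/2)
        = (∑ a : {a // a ∈ S}, p a * u (↑a, rY y)) - ε/2 := by
      simp only [mul_sub]
      rw [Finset.sum_sub_distrib, ← Finset.sum_mul, hp.2, one_mul]
    have h3 := hcol ⟨rY y, hrYT y⟩
    calc v - ε/2 ≤ (∑ a : {a // a ∈ S}, p a * u (↑a, rY y)) - ε/2 := by linarith
      _ = _ := h2.symm
      _ ≤ h y := h1
  -- bounds on the value of the finitely supported pair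
  have hUps : ∫ z, u z ∂(ps.prod qs) = ∑ b : {b // b ∈ T}, q b * h ↑b := by
    rw [hII qs hqs, hqsint h]
  have hvleU : v ≤ ∫ z, u z ∂(ps.prod qs) := by
    rw [hUps]
    calc v = (∑ b : {b // b ∈ T}, q b) * v := by rw [hq.2, one_mul]
      _ = ∑ b : {b // b ∈ T}, q b * v := by rw [Finset.sum_mul]
      _ ≤ ∑ b : {b // b ∈ T}, q b * h ↑b := by
          refine Finset.sum_le_sum fun b _ => mul_le_mul_of_nonneg_left ?_ (hq.1 b)
          exact hcol b
  have hUlev : ∫ z, u z ∂(ps.prod qs) ≤ v := by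
    rw [hI ps hps, hpsint g]
    calc ∑ a : {a // a ∈ S}, p a * g ↑a ≤ ∑ a : {a // a ∈ S}, p a * v := by
          refine Finset.sum_le_sum fun a _ => mul_le_mul_of_nonneg_left ?_ (hp.1 a)
          exact hrow a
      _ = (∑ a : {a // a ∈ S}, p a) * v := by rw [Finset.sum_mul]
      _ = v := by rw [hp.2, one_mul]
  refine ⟨ps, qs, hps, hqs, ⟨S, ?_⟩, ⟨T, ?_⟩, ?_, ?_⟩
  · rw [hpsdef, Measure.finset_sum_apply]
    refine Finset.sum_eq_zero fun a _ => ?_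
    rw [Measure.smul_apply, Measure.dirac_apply]
    rw [Set.indicator_of_notMem (by simp [a.2])]
    simp
  · rw [hqsdef, Measure.finset_sum_apply]
    refine Finset.sum_eq_zero fun b _ => ?_
    rw [Measure.smul_apply, Measure.dirac_apply]
    rw [Set.indicator_of_notMem (by simp [b.2])]
    simp
  · intro π hπ
    haveI := hπ
    have h1 : ∫ z, u z ∂(π.prod qs) = ∫ x, g x ∂π := hI π hπ
    have h2 : ∫ x, g x ∂π ≤ v + ε/2 := by
      calc ∫ x, g x ∂π ≤ ∫ _, (v + ε/2) ∂π :=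
            integral_mono (cont_int π hgc) (integrable_const _)
              (fun x => hgle x)
        _ = v + ε/2 := by simp
    linarith
  · intro ρ hρ
    haveI := hρ
    have h1 : ∫ z, u z ∂(ps.prod ρ) = ∫ y, h y ∂ρ := hII ρ hρ
    have h2 : v - ε/2 ≤ ∫ y, h y ∂ρ := by
      calc (v - ε/2 : ℝ) = ∫ _, (v - ε/2) ∂ρ := by simp
        _ ≤ ∫ y, h y ∂ρ :=
            integral_mono (integrable_const _) (cont_int ρ hhc) (fun y => hhge y)
    linarith
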